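/- Let g be a self-adjoint invertible endomorphism of an n-dimensional real inner product space V with p positive and q negative eigenvalues (p + q = n). Let (b_k) be an orthonormal basis and η the endomorphism with η(b_k) = b_k for k ≤ p and η(b_k) = −b_k for k > p. Then there exists an invertible endomorphism h of V with g = hᵀ ∘ η ∘ h. -/

import Mathlib

open scoped RealInnerProductSpace

theorem stmt_11 {V : Type*} [NormedAddCommGroup V] [InnerProductSpace ℝ V]
    [FiniteDimensional ℝ V] {n : ℕ} (g : V →ₗ[ℝ] V)
    (hsym : ∀ v w : V, ⟪g v, w⟫ = ⟪v, g w⟫) (hinv : Function.Bijective g)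
    -- an orthonormal eigenbasis of `g` with eigenvalues `μ` (spectral theorem):
    (v : OrthonormalBasis (Fin n) ℝ V) (μ : Fin n → ℝ)
    (heig : ∀ i, g (v i) = μ i • v i)
    (p q : ℕ)
    (hpq : p + q = n)
    (hp : p = (Finset.univ.filter fun i : Fin n => 0 < μ i).card)
    (hq : q = (Finset.univ.filter fun i : Fin n => μ i < 0).card)
    (b : OrthonormalBasis (Fin n) ℝ V) (η : V →ₗ[ℝ] V)
    (hη : ∀ k : Fin n, η (b k) = if (k : ℕ) < p then b k else -b k) :
    ∃ h : V →ₗ[ℝ] V, Function.Bijective h ∧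
      g = LinearMap.adjoint h ∘ₗ η ∘ₗ h := by
  classical
  -- eigenvalues are nonzero
  have hμ : ∀ i, μ i ≠ 0 := by
    intro i h0
    have : g (v i) = g 0 := by simp [heig i, h0]
    have hz : (v i : V) = 0 := hinv.1 this
    have h1 := v.orthonormal.1 i
    rw [hz] at h1
    simp at h1
  have hpn : p ≤ n := by omega
  -- cardinalities
  have cardP : Fintype.card {i : Fin n // 0 < μ i} = p := by
    rw [Fintype.card_subtype, ← hp]
  have cardA : Fintype.card {k : Fin n // (k : ℕ) < p} = p := by
    have e : {k : Fin n // (k : ℕ) < p} ≃ Fin p :=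
      { toFun := fun k => ⟨k.1, k.2⟩
        invFun := fun j => ⟨⟨j, lt_of_lt_of_le j.2 hpn⟩, j.2⟩
        left_inv := fun k => rfl
        right_inv := fun j => rfl }
    rw [Fintype.card_congr e, Fintype.card_fin]
  have cardPc : Fintype.card {i : Fin n // ¬ 0 < μ i} = q := by
    have h1 : Fintype.card {i : Fin n // 0 < μ i} +
        Fintype.card {i : Fin n // ¬ 0 < μ i} = n := by
      rw [Fintype.card_subtype, Fintype.card_subtype_compl, Fintype.card_subtype,
        Fintype.card_fin]
      have := Finset.card_filter_le (Finset.univ : Finset (Fin n)) (fun i => 0 < μ i)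
      simp at this
      omega
    omega
  have cardAc : Fintype.card {k : Fin n // ¬ (k : ℕ) < p} = q := by
    have h1 : Fintype.card {k : Fin n // (k : ℕ) < p} +
        Fintype.card {k : Fin n // ¬ (k : ℕ) < p} = n := by
      rw [Fintype.card_subtype, Fintype.card_subtype_compl, Fintype.card_subtype,
        Fintype.card_fin]
      have := Finset.card_filter_le (Finset.univ : Finset (Fin n)) (fun k : Fin n => (k : ℕ) < p)
      simp at this
      omega
    omega
  -- the permutation
  let e1 : {i : Fin n // 0 < μ i} ≃ {k : Fin n // (k : ℕ) < p} :=
    Fintype.equivOfCardEq (by rw [cardP, cardA])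
  let e2 : {i : Fin n // ¬ 0 < μ i} ≃ {k : Fin n // ¬ (k : ℕ) < p} :=
    Fintype.equivOfCardEq (by rw [cardPc, cardAc])
  let σ : Fin n ≃ Fin n :=
    ((Equiv.sumCompl (fun i : Fin n => 0 < μ i)).symm.trans
      (Equiv.sumCongr e1 e2)).trans (Equiv.sumCompl (fun k : Fin n => (k : ℕ) < p))
  have hσ : ∀ i, ((σ i : ℕ) < p ↔ 0 < μ i) := by
    intro i
    by_cases hi : 0 < μ i
    · have h1 : (Equiv.sumCompl (fun i : Fin n => 0 < μ i)).symm i = Sum.inl ⟨i, hi⟩ :=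
        Equiv.sumCompl_symm_apply_of_pos (p := fun i : Fin n => 0 < μ i) (a := i) hi
      have h2 : σ i = ((e1 ⟨i, hi⟩ : {k : Fin n // (k : ℕ) < p}) : Fin n) := by
        simp [σ, Equiv.trans_apply, h1]
      rw [h2]
      exact ⟨fun _ => hi, fun _ => (e1 ⟨i, hi⟩).2⟩
    · have h1 : (Equiv.sumCompl (fun i : Fin n => 0 < μ i)).symm i = Sum.inr ⟨i, hi⟩ :=
        Equiv.sumCompl_symm_apply_of_neg (p := fun i : Fin n => 0 < μ i) (a := i) hi
      have h2 : σ i = ((e2 ⟨i, hi⟩ : {k : Fin n // ¬ (k : ℕ) < p}) : Fin n) := by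
        simp [σ, Equiv.trans_apply, h1]
      rw [h2]
      exact ⟨fun h => absurd h (e2 ⟨i, hi⟩).2, fun h => absurd h hi⟩
  -- the map h
  set c : Fin n → ℝ := fun i => Real.sqrt |μ i| with hc
  have hcpos : ∀ i, 0 < c i := fun i =>
    Real.sqrt_pos.mpr (abs_pos.mpr (hμ i))
  set h : V →ₗ[ℝ] V := v.toBasis.constr ℝ (fun i => c i • b (σ i)) with hhdef
  have hhv : ∀ i, h (v i) = c i • b (σ i) := by
    intro i
    rw [hhdef, ← OrthonormalBasis.coe_toBasis v]
    exact v.toBasis.constr_basis ℝ _ i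
  set h' : V →ₗ[ℝ] V := b.toBasis.constr ℝ (fun k => (c (σ.symm k))⁻¹ • v (σ.symm k)) with hh'def
  have hh'b : ∀ k, h' (b k) = (c (σ.symm k))⁻¹ • v (σ.symm k) := by
    intro k
    rw [hh'def, ← OrthonormalBasis.coe_toBasis b]
    exact b.toBasis.constr_basis ℝ _ k
  have hbij : Function.Bijective h := by
    have hleft : ∀ x, h' (h x) = x := by
      have : h' ∘ₗ h = LinearMap.id := by
        apply v.toBasis.ext
        intro i
        simp only [LinearMap.comp_apply, LinearMap.id_apply, OrthonormalBasis.coe_toBasis]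
        rw [hhv i, map_smul, hh'b, Equiv.symm_apply_apply, smul_smul,
          mul_inv_cancel₀ (hcpos i).ne', one_smul]
      intro x
      simpa using LinearMap.congr_fun this x
    have hright : ∀ x, h (h' x) = x := by
      have : h ∘ₗ h' = LinearMap.id := by
        apply b.toBasis.ext
        intro k
        simp only [LinearMap.comp_apply, LinearMap.id_apply, OrthonormalBasis.coe_toBasis]
        rw [hh'b k, map_smul, hhv, Equiv.apply_symm_apply, smul_smul,
          inv_mul_cancel₀ (hcpos _).ne', one_smul]
      intro x
      simpa using LinearMap.congr_fun this x
    exact ⟨Function.LeftInverse.injective hleft, Function.RightInverse.surjective hright⟩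
  refine ⟨h, hbij, ?_⟩
  apply v.toBasis.ext
  intro i
  apply v.repr.injective
  ext j
  simp only [OrthonormalBasis.coe_toBasis, LinearMap.comp_apply]
  rw [v.repr_apply_apply, v.repr_apply_apply, LinearMap.adjoint_inner_right]
  rw [heig i, hhv i, hhv j, map_smul, hη (σ i)]
  have hbb : ∀ k l : Fin n, ⟪b k, b l⟫ = if k = l then (1:ℝ) else 0 :=
    fun k l => orthonormal_iff_ite.mp b.orthonormal k l
  have hvv : ⟪v j, v i⟫ = if j = i then (1:ℝ) else 0 :=
    orthonormal_iff_ite.mp v.orthonormal j i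
  by_cases hij : j = i
  · subst hij
    have hcc : c j * c j = |μ j| := Real.mul_self_sqrt (abs_nonneg _)
    by_cases hpos : 0 < μ j
    · rw [if_pos ((hσ j).mpr hpos)]
      rw [real_inner_smul_right, real_inner_smul_left, real_inner_smul_right, hbb, hvv]
      rw [abs_of_pos hpos] at hcc
      simp only [if_pos rfl, if_true, eq_self_iff_true, mul_one, mul_neg, mul_neg_one]
      linear_combination -hcc
    · rw [if_neg (fun hh => hpos ((hσ j).mp hh))]
      have hneg : μ j < 0 := lt_of_le_of_ne (not_lt.mp hpos) (hμ j)
      rw [abs_of_neg hneg] at hcc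
      rw [real_inner_smul_right, smul_neg, real_inner_smul_left, inner_neg_right,
        real_inner_smul_right, hbb, hvv]
      simp only [if_pos rfl, if_true, eq_self_iff_true, mul_one, mul_neg, mul_neg_one]
      linear_combination hcc
  · have hσij : σ j ≠ σ i := fun hh => hij (σ.injective hh)
    by_cases hpos : 0 < μ i
    · rw [if_pos ((hσ i).mpr hpos)]
      rw [real_inner_smul_right, real_inner_smul_left, real_inner_smul_right, hbb, hvv,
        if_neg hσij, if_neg hij]
      ring
    · rw [if_neg (fun hh => hpos ((hσ i).mp hh))]
      rw [real_inner_smul_right, smul_neg, real_inner_smul_left, inner_neg_right,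
        real_inner_smul_right, hbb, hvv, if_neg hσij, if_neg hij]
      ring
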